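/- Let m ≥ 1, τ > 0, let p be a real number with 1 < p < 2, and let z ∈ ℝ^m with z ≠ 0. Let R_p(y) = |y|^{p/(p−1)} · (p^{−1/(p−1)} − p^{−p/(p−1)}) denote the convex conjugate of y ↦ |y|^p, and let ᾱ be the unique solution in (0, |z|) of α + τ^{1−p} p α^{p−1} = |z|. Then the point y* = (|z| − ᾱ) · z/|z| is a minimizer of y ↦ R_p(y) + |z − y|²/(2τ) over ℝ^m. -/

import Mathlib

/-- Tangent line inequality for `rpow`. -/
lemma rpow_tangent_line {s r q : ℝ} (hs : 0 < s) (hr : 0 ≤ r) (hq : 1 ≤ q) :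
    s ^ q + q * s ^ (q - 1) * (r - s) ≤ r ^ q := by
  have hx : (-1 : ℝ) ≤ r / s - 1 := by
    have : 0 ≤ r / s := div_nonneg hr hs.le
    linarith
  have hB := one_add_mul_self_le_rpow_one_add hx hq
  have h1 : 1 + (r / s - 1) = r / s := by ring
  rw [h1] at hB
  have hsq : (0:ℝ) < s ^ q := Real.rpow_pos_of_pos hs q
  have key := mul_le_mul_of_nonneg_right hB hsq.le
  have hrq : (r / s) ^ q * s ^ q = r ^ q := by
    rw [← Real.mul_rpow (div_nonneg hr hs.le) hs.le, div_mul_cancel₀ _ hs.ne']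
  have hs1 : s ^ (q - 1) = s ^ q / s := by
    rw [Real.rpow_sub hs, Real.rpow_one]
  have hlhs : (1 + q * (r / s - 1)) * s ^ q = s ^ q + q * s ^ (q - 1) * (r - s) := by
    rw [hs1]
    field_simp
  rw [hrq, hlhs] at key
  exact key

/-- 1-D version of the minimization. -/
lemma scalar_min (τ p α r Z : ℝ) (hτ : 0 < τ) (hp1 : 1 < p) (hp2 : p < 2)
    (hα0 : 0 < α) (hαz : α < Z) (hr : 0 ≤ r)
    (hαeq : α + τ ^ (1 - p) * p * α ^ (p - 1) = Z) :
    (Z - α) ^ (p / (p - 1)) * (p ^ (-1 / (p - 1)) - p ^ (-p / (p - 1))) + α ^ 2 / (2 * τ)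
      ≤ r ^ (p / (p - 1)) * (p ^ (-1 / (p - 1)) - p ^ (-p / (p - 1))) + (Z - r) ^ 2 / (2 * τ) := by
  have hp0 : (0:ℝ) < p := by linarith
  have hpm1 : (0:ℝ) < p - 1 := by linarith
  set q : ℝ := p / (p - 1) with hqdef
  set c : ℝ := p ^ (-1 / (p - 1)) - p ^ (-p / (p - 1)) with hcdef
  set s : ℝ := Z - α with hsdef
  have hs0 : 0 < s := by simp only [hsdef]; linarith
  have hs_eq : s = τ ^ (1 - p) * p * α ^ (p - 1) := by
    simp only [hsdef]; linarith
  have hq1 : 1 ≤ q := by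
    rw [hqdef, le_div_iff₀ hpm1]; linarith
  have hqm1 : q - 1 = 1 / (p - 1) := by
    rw [hqdef]; field_simp; ring
  -- c > 0
  have hc0 : 0 < c := by
    rw [hcdef, sub_pos]
    apply (Real.rpow_lt_rpow_left_iff hp1).mpr
    rw [div_lt_div_iff_of_pos_right hpm1]
    linarith
  -- s ^ (q-1) = τ⁻¹ * p^(1/(p-1)) * α
  have hspow : s ^ (q - 1) = τ⁻¹ * p ^ (1 / (p - 1)) * α := by
    rw [hqm1, hs_eq]
    rw [Real.mul_rpow (by positivity) (by positivity),
        Real.mul_rpow (by positivity) hp0.le,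
        ← Real.rpow_mul hτ.le, ← Real.rpow_mul hα0.le]
    have e1 : (1 - p) * (1 / (p - 1)) = -1 := by field_simp; ring
    have e2 : (p - 1) * (1 / (p - 1)) = 1 := by field_simp
    rw [e1, e2, Real.rpow_neg_one, Real.rpow_one]
  -- c * q = p ^ (-1/(p-1))
  have hcq : c * q = p ^ (-1 / (p - 1)) := by
    have hpp : p ^ (-p / (p - 1)) = p ^ (-1 / (p - 1)) * p⁻¹ := by
      have h : -p / (p - 1) = -1 / (p - 1) + (-1) := by field_simp; ring
      rw [h, Real.rpow_add hp0, Real.rpow_neg_one]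
    rw [hcdef, hqdef, hpp]
    field_simp
  have hpp2 : p ^ (-1 / (p - 1)) * p ^ (1 / (p - 1)) = 1 := by
    have h0 : -1 / (p - 1) + 1 / (p - 1) = 0 := by ring
    rw [← Real.rpow_add hp0, h0, Real.rpow_zero]
  have hK : c * q * s ^ (q - 1) * τ = α := by
    rw [hcq, hspow]
    rw [show p ^ (-1 / (p - 1)) * (τ⁻¹ * p ^ (1 / (p - 1)) * α) * τ = (p ^ (-1 / (p - 1)) * p ^ (1 / (p - 1))) * α * (τ⁻¹ * τ) by ring, hpp2, inv_mul_cancel₀ hτ.ne']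
    ring
  have hT := rpow_tangent_line hs0 hr hq1
  have hT2 : c * (s ^ q + q * s ^ (q - 1) * (r - s)) ≤ c * r ^ q :=
    mul_le_mul_of_nonneg_left hT hc0.le
  have hK2 : c * q * s ^ (q - 1) * τ * (r - s) = α * (r - s) := by
    rw [hK]
  have key : (s ^ q * c) * (2 * τ) + α ^ 2 ≤ (r ^ q * c) * (2 * τ) + (Z - r) ^ 2 := by
    have hZ : Z = s + α := by rw [hsdef]; ring
    have hprod : 0 ≤ (c * r ^ q - c * (s ^ q + q * s ^ (q - 1) * (r - s))) * (2 * τ) :=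
      mul_nonneg (by linarith) (by linarith)
    nlinarith [sq_nonneg (s - r), hprod, hK2]
  have h2τ : (0:ℝ) < 2 * τ := by linarith
  rw [← sub_nonneg]
  have heq : r ^ q * c + (Z - r) ^ 2 / (2 * τ) - ((Z - α) ^ q * c + α ^ 2 / (2 * τ))
      = ((r ^ q * c) * (2 * τ) + (Z - r) ^ 2 - ((s ^ q * c) * (2 * τ) + α ^ 2)) / (2 * τ) := by
    rw [← hsdef]
    field_simp
  rw [heq]
  exact div_nonneg (by linarith) h2τ.le

theorem prox_cconj_rpow_norm_minimizer (m : ℕ) (hm : 1 ≤ m) (τ p : ℝ)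
    (hτ : 0 < τ) (hp1 : 1 < p) (hp2 : p < 2)
    (z : EuclideanSpace ℝ (Fin m)) (hz : z ≠ 0)
    (α : ℝ) (hα0 : 0 < α) (hαz : α < ‖z‖)
    (hαeq : α + τ ^ (1 - p) * p * α ^ (p - 1) = ‖z‖) :
    ∀ y : EuclideanSpace ℝ (Fin m),
      ‖((‖z‖ - α) / ‖z‖) • z‖ ^ (p / (p - 1)) * (p ^ (-1 / (p - 1)) - p ^ (-p / (p - 1)))
          + ‖z - ((‖z‖ - α) / ‖z‖) • z‖ ^ 2 / (2 * τ)
        ≤ ‖y‖ ^ (p / (p - 1)) * (p ^ (-1 / (p - 1)) - p ^ (-p / (p - 1)))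
          + ‖z - y‖ ^ 2 / (2 * τ) := by
  intro y
  have hz0 : 0 < ‖z‖ := norm_pos_iff.mpr hz
  have hnorm1 : ‖((‖z‖ - α) / ‖z‖) • z‖ = ‖z‖ - α := by
    rw [norm_smul, Real.norm_eq_abs,
        abs_of_nonneg (div_nonneg (by linarith) hz0.le), div_mul_cancel₀ _ hz0.ne']
  have hdiff : z - ((‖z‖ - α) / ‖z‖) • z = (α / ‖z‖) • z := by
    have h1 : 1 - (‖z‖ - α) / ‖z‖ = α / ‖z‖ := by field_simp; ring
    calc z - ((‖z‖ - α) / ‖z‖) • z = (1 - (‖z‖ - α) / ‖z‖) • z := by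
          rw [sub_smul, one_smul]
      _ = (α / ‖z‖) • z := by rw [h1]
  have hnorm2 : ‖z - ((‖z‖ - α) / ‖z‖) • z‖ = α := by
    rw [hdiff, norm_smul, Real.norm_eq_abs,
        abs_of_nonneg (div_nonneg hα0.le hz0.le), div_mul_cancel₀ _ hz0.ne']
  rw [hnorm1, hnorm2]
  have hstep := scalar_min τ p α ‖y‖ ‖z‖ hτ hp1 hp2 hα0 hαz (norm_nonneg y) hαeq
  refine hstep.trans (add_le_add_right ?_ _)
  have hq2 : (‖z‖ - ‖y‖) ^ 2 ≤ ‖z - y‖ ^ 2 :=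
    calc (‖z‖ - ‖y‖) ^ 2 = |‖z‖ - ‖y‖| ^ 2 := (sq_abs _).symm
      _ ≤ ‖z - y‖ ^ 2 := pow_le_pow_left₀ (abs_nonneg _) (abs_norm_sub_norm_le z y) 2
  exact (div_le_div_iff_of_pos_right (by linarith : (0:ℝ) < 2 * τ)).mpr hq2
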